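/- Poincaré lemma for the coderivative: Take any 1 ≤ k ≤ n−1 and an abelian group G. Let f be a G-valued k-form on ℤⁿ that is zero outside a finite region and satisfies δf = 0. Then there is a G-valued (k+1)-form h on ℤⁿ with f = δh. Moreover, if f is zero on every k-cell not in a cube B, then h can be chosen to be zero on every (k+1)-cell not in B. -/

import Mathlib

/-!
Discrete exterior calculus on the cell complex of `ℤⁿ`.

A positively oriented `k`-cell `dx_{i₁} ∧ ⋯ ∧ dx_{i_k}` (with `i₁ < ⋯ < i_k`) at the point
`x ∈ ℤⁿ` is encoded as the pair `(x, S)` with `S = {i₁, …, i_k}`, so its dimension is `S.card`.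
A `G`-valued `k`-form is a `G`-valued function on cells; only its values on cells of
dimension `k` are relevant (a single function type conveniently encodes forms of all
degrees; every statement below is made on cells of the appropriate dimension).

The dual lattice `*ℤⁿ` is identified with `ℤⁿ`: the dual vertex `y = z + (1/2, …, 1/2)`
(the center of the unit `n`-cell with base vertex `z`) is identified with the integer point
`z`, and the edges of the dual lattice at `y` point in the *negative* coordinate directions;
the dual cell `dy_{j₁} ∧ ⋯ ∧ dy_{j_m}` at `y` is encoded as the pair `(z, {j₁, …, j_m})`.
-/

/-- A cell of `ℤⁿ` (or of the dual lattice `*ℤⁿ`): a base point and a set of spanning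
directions. -/
abbrev GCell (n : ℕ) := (Fin n → ℤ) × Finset (Fin n)

/-- The unit vector `e_i`. -/
def unitV (n : ℕ) (i : Fin n) : Fin n → ℤ := fun m => if m = i then 1 else 0

section Forms

variable {n : ℕ} {G : Type*} [AddCommGroup G]

/-- The discrete exterior derivative on `ℤⁿ`: for a `k`-form `f`,
`(df)_{i₁⋯i_{k+1}}(x) = ∑_j (−1)^{j−1} ∂_{i_j} f_{i₁⋯î_j⋯i_{k+1}}(x)`, where
`∂_i h(x) = h(x + e_i) − h(x)`. -/
def dF (f : GCell n → G) : GCell n → G := fun c =>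
  ∑ i ∈ c.2.attach,
    ((-1 : ℤ) ^ (c.2.filter (fun j => j < i.1)).card) •
      (f (c.1 + unitV n i.1, c.2.erase i.1) - f (c.1, c.2.erase i.1))

/-- The exterior derivative on the dual lattice: the same formula as `dF` but with `∂_i`
replaced by `∂̄_i`, where `∂̄_i h(y) = h(y) − h(y − e_i)`. -/
def dFDual (f : GCell n → G) : GCell n → G := fun c =>
  ∑ i ∈ c.2.attach,
    ((-1 : ℤ) ^ (c.2.filter (fun j => j < i.1)).card) •
      (f (c.1, c.2.erase i.1) - f (c.1 - unitV n i.1, c.2.erase i.1))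

/-- The discrete coderivative on `ℤⁿ`: for a `k`-form `f`,
`δf(x) = ∑_{i₁<⋯<i_k} ∑_l (−1)^l ∂̄_{i_l} f_{i₁⋯i_k}(x) dx_{i₁} ∧ ⋯ ∧ dx̂_{i_l} ∧ ⋯ ∧ dx_{i_k}`,
where `∂̄_i h(x) = h(x) − h(x − e_i)`  (and `δf = 0` for `0`-forms). -/
def codiff (f : GCell n → G) : GCell n → G := fun c =>
  ∑ i ∈ (c.2ᶜ).attach,
    ((-1 : ℤ) ^ ((c.2.filter (fun j => j < i.1)).card + 1)) •
      (f (c.1, insert i.1 c.2) - f (c.1 - unitV n i.1, insert i.1 c.2))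

/-- The sign of the permutation `(i₁, …, i_k, j₁, …, j_{n−k})`, where `i₁ < ⋯ < i_k` lists
`S` and `j₁ < ⋯ < j_{n−k}` lists its complement. -/
def hodgeSign (S : Finset (Fin n)) : ℤ :=
  (-1) ^ (∑ i ∈ S, ((Sᶜ : Finset (Fin n)).filter (fun j => j < i)).card)

/-- The Hodge dual of a `k`-form `f` on `ℤⁿ`: the `(n−k)`-form `*f` on the dual lattice
determined by `*f(*c) = f(c)`, i.e. `*f(z, T) = s · f(z, Tᶜ)` with `s` the sign of the
permutation `(Tᶜ, T)`. -/
def hodgeToDual (f : GCell n → G) : GCell n → G := fun c =>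
  hodgeSign (c.2ᶜ) • f (c.1, c.2ᶜ)

/-- The Hodge dual of a form `g` on the dual lattice `*ℤⁿ`: the form `*g` on `ℤⁿ`
determined by `*g(*c') = g(c')`, i.e. `*g(x, S) = (−1)^{|S|·|Sᶜ|} s · g(x, Sᶜ)` with `s`
the sign of the permutation `(S, Sᶜ)`. -/
def hodgeToPrimal (g : GCell n → G) : GCell n → G := fun c =>
  ((-1 : ℤ) ^ (c.2.card * (c.2ᶜ : Finset (Fin n)).card) * hodgeSign c.2) • g (c.1, c.2ᶜ)

end Forms

section Cube

variable {n : ℕ}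

/-- Membership of a point in the cube `[a₁, a₁+w] × ⋯ × [a_n, a_n+w] ∩ ℤⁿ`. -/
def InCube (a : Fin n → ℤ) (w : ℕ) (v : Fin n → ℤ) : Prop :=
  ∀ m, a m ≤ v m ∧ v m ≤ a m + w

/-- `v` is a vertex of the cell `c` (that is, `v = x + ∑_{i ∈ T} e_i` for some `T ⊆ S`). -/
def CellVert (c : GCell n) (v : Fin n → ℤ) : Prop :=
  ∃ T ⊆ c.2, v = fun m => c.1 m + (if m ∈ T then 1 else 0)

/-- The cell `c` is in the cube: all its vertices are in the cube. -/
def CellIn (a : Fin n → ℤ) (w : ℕ) (c : GCell n) : Prop :=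
  ∀ m, a m ≤ c.1 m ∧ c.1 m + (if m ∈ c.2 then 1 else 0) ≤ a m + w

/-- A boundary vertex of the cube. -/
def BdryVtx (a : Fin n → ℤ) (w : ℕ) (v : Fin n → ℤ) : Prop :=
  InCube a w v ∧ ∃ m, v m = a m ∨ v m = a m + w

/-- The cell `c` is on the boundary of the cube: all its vertices are boundary vertices. -/
def CellOnBdry (a : Fin n → ℤ) (w : ℕ) (c : GCell n) : Prop :=
  CellIn a w c ∧ ∀ v, CellVert c v → BdryVtx a w v

/-- The cell `c` is outside the cube: some vertex of `c` is outside the cube. -/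
def CellOutside (a : Fin n → ℤ) (w : ℕ) (c : GCell n) : Prop :=
  ∃ v, CellVert c v ∧ ¬ InCube a w v

lemma cellIn_iff {a : Fin n → ℤ} {w : ℕ} {c : GCell n} :
    CellIn a w c ↔ ∀ v, CellVert c v → InCube a w v := by
  constructor
  · rintro h v ⟨T, hT, rfl⟩ m
    obtain ⟨h1, h2⟩ := h m
    by_cases hm : m ∈ T
    · have hmS : m ∈ c.2 := hT hm
      simp only [hm, if_pos, hmS] at *
      omega
    · simp only [hm, if_neg, not_false_iff, add_zero]
      constructor
      · exact h1
      · split at h2 <;> omega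
  · intro h m
    have h0 := h c.1 ⟨∅, Finset.empty_subset _, by funext m; simp⟩
    constructor
    · exact (h0 m).1
    · by_cases hm : m ∈ c.2
      · have := (h (fun m' => c.1 m' + (if m' ∈ ({m} : Finset (Fin n)) then 1 else 0))
          ⟨{m}, by simpa using hm, rfl⟩) m
        simpa [hm] using this.2
      · have := h0 m
        simpa [hm] using this.2

lemma cellIn_erase {a : Fin n → ℤ} {w : ℕ} {c : GCell n} (h : CellIn a w c) (i : Fin n) :
    CellIn a w (c.1, c.2.erase i) := by
  intro m
  obtain ⟨h1, h2⟩ := h m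
  refine ⟨h1, ?_⟩
  by_cases hm : m ∈ c.2.erase i
  · simpa [hm, Finset.mem_of_mem_erase hm] using h2
  · simp only [hm, if_neg, not_false_iff, add_zero]
    split at h2 <;> omega

lemma cellIn_shift_erase {a : Fin n → ℤ} {w : ℕ} {c : GCell n} (h : CellIn a w c)
    {i : Fin n} (hi : i ∈ c.2) :
    CellIn a w (c.1 + unitV n i, c.2.erase i) := by
  intro m
  obtain ⟨h1, h2⟩ := h m
  simp only [Pi.add_apply, unitV]
  by_cases hmi : m = i
  · subst hmi
    have hmm : m ∉ c.2.erase m := by simp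
    simp only [if_pos rfl, hmm, if_neg, not_false_iff, add_zero]
    simp only [hi, if_pos] at h2
    omega
  · simp only [hmi, if_neg, not_false_iff, add_zero]
    refine ⟨h1, ?_⟩
    by_cases hm : m ∈ c.2.erase i
    · simpa [hm, Finset.mem_of_mem_erase hm] using h2
    · simp only [hm, if_neg, not_false_iff, add_zero]
      split at h2 <;> omega

variable {G : Type*} [AddCommGroup G]

/-- A `G`-valued form on the cube with corner `a` and width `w`: a function on the cells of
the cube (of all dimensions; only the values in one dimension are relevant at a time). -/
abbrev FormC (a : Fin n → ℤ) (w : ℕ) (G : Type*) := {c : GCell n // CellIn a w c} → G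

/-- The exterior derivative of a form on a cube, given by the same formula as `dF`. -/
def dFC (a : Fin n → ℤ) (w : ℕ) (f : FormC a w G) : FormC a w G := fun c =>
  ∑ i ∈ c.1.2.attach,
    ((-1 : ℤ) ^ (c.1.2.filter (fun j => j < i.1)).card) •
      (f ⟨(c.1.1 + unitV n i.1, c.1.2.erase i.1), cellIn_shift_erase c.2 i.2⟩
        - f ⟨(c.1.1, c.1.2.erase i.1), cellIn_erase c.2 i.1⟩)

end Cube

section DegreeForms

variable {n : ℕ} {G : Type*} [AddCommGroup G]

/-- A `G`-valued `k`-form on the cube with corner `a` and width `w`: a function on the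
positively oriented `k`-cells in the cube. -/
abbrev FormB (a : Fin n → ℤ) (w : ℕ) (k : ℕ) (G : Type*) :=
  {c : GCell n // CellIn a w c ∧ c.2.card = k} → G

/-- The exterior derivative of a `k`-form on a cube, as a `(k+1)`-form on the cube. -/
def dB {a : Fin n → ℤ} {w : ℕ} {k : ℕ} (f : FormB a w k G) : FormB a w (k + 1) G := fun c =>
  ∑ i ∈ c.1.2.attach,
    ((-1 : ℤ) ^ (c.1.2.filter (fun j => j < i.1)).card) •
      (f ⟨(c.1.1 + unitV n i.1, c.1.2.erase i.1),
          ⟨cellIn_shift_erase c.2.1 i.2, by simp [Finset.card_erase_of_mem i.2, c.2.2]⟩⟩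
        - f ⟨(c.1.1, c.1.2.erase i.1),
          ⟨cellIn_erase c.2.1 i.1, by simp [Finset.card_erase_of_mem i.2, c.2.2]⟩⟩)

open scoped Classical in
/-- The extension of a `k`-form on a cube to a form on all of `ℤⁿ`, by zero outside. -/
noncomputable def extZ (a : Fin n → ℤ) (w : ℕ) (k : ℕ) (f : FormB a w k G) :
    GCell n → G := fun c =>
  if h : CellIn a w c ∧ c.2.card = k then f ⟨c, h⟩ else 0

end DegreeForms

section DualCube

variable {n : ℕ}

/-!
In the integer coordinates for the dual lattice described above, the dual cube `*B` of the
cube `B` with corner `a` and width `w` (whose dual vertices are the centers of the unit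
`n`-cells meeting `B`, i.e. `*B = [a−1/2, a+w+1/2]ⁿ ∩ *ℤⁿ`) has vertex set `[a−1, a+w]ⁿ`;
a dual cell `(z, T)` has vertices `z − ∑_{i∈T'} e_i` for `T' ⊆ T`.
-/

/-- Membership of a dual-lattice point (in integer coordinates) in the dual cube `*B`. -/
def InDCube (a : Fin n → ℤ) (w : ℕ) (v : Fin n → ℤ) : Prop :=
  ∀ m, a m - 1 ≤ v m ∧ v m ≤ a m + w

/-- `v` is a vertex of the dual cell `c` (i.e. `v = z − ∑_{i ∈ T'} e_i` for some `T' ⊆ T`). -/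
def DCellVert (c : GCell n) (v : Fin n → ℤ) : Prop :=
  ∃ T ⊆ c.2, v = fun m => c.1 m - (if m ∈ T then 1 else 0)

/-- The dual cell `c` is in the dual cube `*B`: all its vertices are in `*B`. -/
def DCellIn (a : Fin n → ℤ) (w : ℕ) (c : GCell n) : Prop :=
  ∀ m, a m - 1 ≤ c.1 m - (if m ∈ c.2 then 1 else 0) ∧ c.1 m ≤ a m + w

/-- A boundary vertex of the dual cube `*B`. -/
def DBdryVtx (a : Fin n → ℤ) (w : ℕ) (v : Fin n → ℤ) : Prop :=
  InDCube a w v ∧ ∃ m, v m = a m - 1 ∨ v m = a m + w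

/-- The dual cell `c` is on the boundary of `*B`: all its vertices are boundary vertices. -/
def DCellOnBdry (a : Fin n → ℤ) (w : ℕ) (c : GCell n) : Prop :=
  DCellIn a w c ∧ ∀ v, DCellVert c v → DBdryVtx a w v

/-- The dual cell `c` is outside `*B`: some vertex of `c` is outside `*B`. -/
def DCellOutside (a : Fin n → ℤ) (w : ℕ) (c : GCell n) : Prop :=
  ∃ v, DCellVert c v ∧ ¬ InDCube a w v

/-- The Hodge dual of the cell `(x, S)`, as an unoriented cell of the dual lattice:
the `(n−k)`-cell `(x, Sᶜ)`. -/
def dualCell (c : GCell n) : GCell n := (c.1, (c.2ᶜ : Finset (Fin n)))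

lemma dCellIn_erase {a : Fin n → ℤ} {w : ℕ} {c : GCell n} (h : DCellIn a w c) (i : Fin n) :
    DCellIn a w (c.1, c.2.erase i) := by
  intro m
  obtain ⟨h1, h2⟩ := h m
  refine ⟨?_, h2⟩
  by_cases hm : m ∈ c.2.erase i
  · simpa [hm, Finset.mem_of_mem_erase hm] using h1
  · simp only [hm, if_neg, not_false_iff, sub_zero]
    split at h1 <;> omega

lemma dCellIn_shift_erase {a : Fin n → ℤ} {w : ℕ} {c : GCell n} (h : DCellIn a w c)
    {i : Fin n} (hi : i ∈ c.2) :
    DCellIn a w (c.1 - unitV n i, c.2.erase i) := by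
  intro m
  obtain ⟨h1, h2⟩ := h m
  simp only [Pi.sub_apply, unitV]
  by_cases hmi : m = i
  · subst hmi
    have hmm : m ∉ c.2.erase m := by simp
    simp only [if_pos rfl, hmm, if_neg, not_false_iff, sub_zero]
    simp only [hi, if_pos] at h1
    omega
  · simp only [hmi, if_neg, not_false_iff, sub_zero]
    refine ⟨?_, h2⟩
    by_cases hm : m ∈ c.2.erase i
    · simpa [hm, Finset.mem_of_mem_erase hm] using h1
    · simp only [hm, if_neg, not_false_iff, sub_zero]
      split at h1 <;> omega

variable {G : Type*} [AddCommGroup G]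

/-- A `G`-valued `j`-form on the dual cube `*B`: a function on the `j`-cells of the dual
lattice lying in `*B`. -/
abbrev FormDB (a : Fin n → ℤ) (w : ℕ) (j : ℕ) (G : Type*) :=
  {c : GCell n // DCellIn a w c ∧ c.2.card = j} → G

/-- The exterior derivative of a `j`-form on the dual cube `*B`, as a `(j+1)`-form on `*B`
(the same formula as `dF`, with `∂_i` replaced by `∂̄_i`). -/
def dDB {a : Fin n → ℤ} {w : ℕ} {j : ℕ} (g : FormDB a w j G) : FormDB a w (j + 1) G :=
  fun c =>
    ∑ i ∈ c.1.2.attach,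
      ((-1 : ℤ) ^ (c.1.2.filter (fun j' => j' < i.1)).card) •
        (g ⟨(c.1.1, c.1.2.erase i.1),
            ⟨dCellIn_erase c.2.1 i.1, by simp [Finset.card_erase_of_mem i.2, c.2.2]⟩⟩
          - g ⟨(c.1.1 - unitV n i.1, c.1.2.erase i.1),
            ⟨dCellIn_shift_erase c.2.1 i.2, by simp [Finset.card_erase_of_mem i.2, c.2.2]⟩⟩)

open scoped Classical in
/-- The Hodge dual `*f`, a `j`-form on the dual cube `*B`, of a `k`-form `f` on the cube
`B`: it is determined by `*f(*c) = f(c)` on the internal cells of `*B` (equivalently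
`*f(z,T) = s·f(z,Tᶜ)` with `s` the sign of the permutation `(Tᶜ, T)`), and is zero on the
boundary cells of `*B`. -/
noncomputable def starB (a : Fin n → ℤ) (w : ℕ) (k : ℕ) {j : ℕ} (f : FormB a w k G) :
    FormDB a w j G := fun c =>
  if DCellOnBdry a w c.1 then 0
  else hodgeSign ((c.1.2ᶜ : Finset (Fin n))) • extZ a w k f (c.1.1, (c.1.2ᶜ : Finset (Fin n)))

end DualCube

namespace PoincareHelper

open Finset

variable {n : ℕ} {G : Type*} [AddCommGroup G]

private lemma sum_tele_aux (g : ℤ → G) (l : ℤ) :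
    ∀ d : ℕ, ∑ s ∈ Finset.Icc l (l - 1 + d), (g s - g (s - 1))
      = g (l - 1 + d) - g (l - 1) := by
  intro d
  induction d with
  | zero =>
    rw [show l - 1 + ((0 : ℕ) : ℤ) = l - 1 from by push_cast; ring,
      Finset.Icc_eq_empty (by omega), Finset.sum_empty, sub_self]
  | succ d ih =>
    have h0 : l - 1 + ((d + 1 : ℕ) : ℤ) = (l - 1 + d) + 1 := by push_cast; ring
    rw [h0, show Finset.Icc l (l - 1 + (d : ℤ) + 1)
          = insert (l - 1 + (d : ℤ) + 1) (Finset.Icc l (l - 1 + (d : ℤ))) from by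
        ext y; simp only [Finset.mem_insert, Finset.mem_Icc]; omega,
      Finset.sum_insert (by simp only [Finset.mem_Icc]; omega), ih]
    have h1 : l - 1 + (d : ℤ) + 1 - 1 = l - 1 + d := by ring
    rw [h1]
    abel

private lemma sum_tele (g : ℤ → G) {l u : ℤ} (h : l - 1 ≤ u) :
    ∑ s ∈ Finset.Icc l u, (g s - g (s - 1)) = g u - g (l - 1) := by
  obtain ⟨d, hd⟩ : ∃ d : ℕ, u = l - 1 + d := ⟨(u - (l - 1)).toNat, by omega⟩
  subst hd
  exact sum_tele_aux g l d

lemma codiff_apply (f : GCell n → G) (c : GCell n) :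
    codiff f c = ∑ i ∈ c.2ᶜ, ((-1 : ℤ) ^ ((c.2.filter (fun j => j < i)).card + 1)) •
      (f (c.1, insert i c.2) - f (c.1 - unitV n i, insert i c.2)) :=
  Finset.sum_attach (c.2ᶜ) (fun i => ((-1 : ℤ) ^ ((c.2.filter (fun j => j < i)).card + 1)) •
      (f (c.1, insert i c.2) - f (c.1 - unitV n i, insert i c.2)))

lemma codiff_addf (g h : GCell n → G) (c : GCell n) :
    codiff (fun c => g c + h c) c = codiff g c + codiff h c := by
  simp only [codiff]
  rw [← Finset.sum_add_distrib]
  exact Finset.sum_congr rfl fun i _ => by rw [← smul_add, add_sub_add_comm]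

lemma codiff_zerof (c : GCell n) : codiff (fun _ => (0 : G)) c = 0 := by
  simp [codiff]

lemma sub_unit_apply_ne {i m : Fin n} (h : i ≠ m) (x : Fin n → ℤ) :
    (x - unitV n i) m = x m := by
  simp [unitV, Ne.symm h]

lemma sub_unit_apply_self (m : Fin n) (x : Fin n → ℤ) :
    (x - unitV n m) m = x m - 1 := by
  simp [unitV]

lemma update_sub_unit {i m : Fin n} (h : i ≠ m) (x : Fin n → ℤ) (s : ℤ) :
    Function.update (x - unitV n i) m s = Function.update x m s - unitV n i := by
  funext j
  rcases eq_or_ne j m with rfl | hj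
  · simp [Function.update_self, unitV, Ne.symm h]
  · simp [Function.update_of_ne hj]

lemma update_sub_unit_self (m : Fin n) (x : Fin n → ℤ) (s : ℤ) :
    Function.update x m s - unitV n m = Function.update x m (s - 1) := by
  funext j
  rcases eq_or_ne j m with rfl | hj
  · simp [Function.update_self, unitV]
  · simp [Function.update_of_ne hj, unitV, hj]

lemma update_sub_unit_self' (m : Fin n) (x : Fin n → ℤ) (s : ℤ) :
    Function.update (x - unitV n m) m s = Function.update x m s := by
  funext j
  rcases eq_or_ne j m with rfl | hj
  · simp [Function.update_self]
  · simp [Function.update_of_ne hj, unitV, hj]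

lemma notCellIn {a : Fin n → ℤ} {w : ℕ} {x : Fin n → ℤ} {S : Finset (Fin n)} (m' : Fin n)
    (h : ¬ (a m' ≤ x m' ∧ x m' + (if m' ∈ S then 1 else 0) ≤ a m' + w)) :
    ¬ CellIn a w (x, S) := fun H => h (H m')

/-- The prism operator in direction `m`. -/
noncomputable def Pop (a : Fin n → ℤ) (w : ℕ) (m : Fin n) (f : GCell n → G) : GCell n → G
  | (x, S) =>
    if m ∈ S ∧ a m ≤ x m then
      ((-1 : ℤ) ^ (S.filter (fun j => j < m)).card) •
        ∑ s ∈ Finset.Icc (x m + 1) (a m + w), f (Function.update x m s, S.erase m)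
    else 0

/-- The projection operator in direction `m`. -/
noncomputable def Qop (a : Fin n → ℤ) (w : ℕ) (m : Fin n) (f : GCell n → G) : GCell n → G
  | (x, S) =>
    if m ∉ S ∧ x m = a m then
      ∑ t ∈ Finset.Icc (a m) (a m + w), f (Function.update x m t, S)
    else 0

variable (a : Fin n → ℤ) (w : ℕ) (m : Fin n) (f : GCell n → G) (k : ℕ)

lemma Pop_pos {x : Fin n → ℤ} {S : Finset (Fin n)} (h1 : m ∈ S) (h2 : a m ≤ x m) :
    Pop a w m f (x, S) = ((-1 : ℤ) ^ (S.filter (fun j => j < m)).card) •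
      ∑ s ∈ Finset.Icc (x m + 1) (a m + w), f (Function.update x m s, S.erase m) := by
  simp only [Pop, if_pos (And.intro h1 h2)]

lemma Qop_mem {c : GCell n} (hm : m ∈ c.2) : Qop a w m f c = 0 := by
  obtain ⟨x, S⟩ := c
  simp only [Qop]
  rw [if_neg]
  rintro ⟨h, -⟩
  exact h hm

lemma Pop_not_in (hs : ∀ c : GCell n, c.2.card = k → ¬ CellIn a w c → f c = 0)
    (c : GCell n) (hc : c.2.card = k + 1) (hout : ¬ CellIn a w c) :
    Pop a w m f c = 0 := by
  obtain ⟨x, S⟩ := c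
  simp only [Pop]
  split
  case isFalse => rfl
  case isTrue hg =>
    obtain ⟨hmS, hax⟩ := hg
    simp only [CellIn, not_forall] at hout
    obtain ⟨m', hm'⟩ := hout
    rcases eq_or_ne m' m with rfl | hne
    · rw [if_pos hmS] at hm'
      rw [Finset.Icc_eq_empty (by omega), Finset.sum_empty, smul_zero]
    · rw [Finset.sum_eq_zero, smul_zero]
      intro s _
      have hc' : S.card = k + 1 := hc
      refine hs (Function.update x m s, S.erase m) ?_ (notCellIn m' ?_)
      · show (S.erase m).card = k
        rw [Finset.card_erase_of_mem hmS]
        omega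
      · simpa [Function.update_of_ne hne, Finset.mem_erase, hne] using hm'

lemma Qop_not_in (hs : ∀ c : GCell n, c.2.card = k → ¬ CellIn a w c → f c = 0)
    (c : GCell n) (hc : c.2.card = k) (hout : ¬ CellIn a w c) :
    Qop a w m f c = 0 := by
  obtain ⟨x, S⟩ := c
  simp only [Qop]
  split
  case isFalse => rfl
  case isTrue hg =>
    obtain ⟨hmS, hax⟩ := hg
    apply Finset.sum_eq_zero
    intro t _
    simp only [CellIn, not_forall] at hout
    obtain ⟨m', hm'⟩ := hout
    rcases eq_or_ne m' m with rfl | hne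
    · exfalso
      apply hm'
      rw [if_neg hmS, hax]
      omega
    · exact hs (Function.update x m t, S) hc (notCellIn m' (by simpa [Function.update_of_ne hne] using hm'))

lemma Qop_kill (m₀ : Fin n) (hk : ∀ c : GCell n, c.2.card = k → m₀ ∈ c.2 → f c = 0)
    (c : GCell n) (hc : c.2.card = k) (hm₀ : m₀ ∈ c.2) : Qop a w m f c = 0 := by
  obtain ⟨x, S⟩ := c
  simp only [Qop]
  split
  case isFalse => rfl
  case isTrue hg => exact Finset.sum_eq_zero fun t _ => hk _ hc hm₀

lemma sign_eq {S : Finset (Fin n)} {m i : Fin n} (hmS : m ∈ S) (hiS : i ∉ S) (hne : i ≠ m) :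
    ((-1 : ℤ) ^ ((S.filter (fun j => j < i)).card + 1)) *
        (-1) ^ (((insert i S).filter (fun j => j < m)).card)
      = ((-1 : ℤ) ^ ((S.filter (fun j => j < m)).card + 1)) *
        (-1) ^ (((S.erase m).filter (fun j => j < i)).card + 1) := by
  rcases hne.lt_or_gt with hlt | hlt
  · have h1 : (insert i S).filter (fun j => j < m) = insert i (S.filter (fun j => j < m)) := by
      rw [Finset.filter_insert, if_pos hlt]
    have h2 : (S.erase m).filter (fun j => j < i) = S.filter (fun j => j < i) := by
      rw [Finset.filter_erase, Finset.erase_eq_of_notMem]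
      simp only [Finset.mem_filter, not_and]
      exact fun _ h => absurd h (not_lt_of_gt hlt)
    rw [h1, h2, Finset.card_insert_of_notMem (by simp [hiS]), ← pow_add, ← pow_add]
    congr 1
    omega
  · have h1 : (insert i S).filter (fun j => j < m) = S.filter (fun j => j < m) := by
      rw [Finset.filter_insert, if_neg (not_lt_of_gt hlt)]
    have hm' : m ∈ S.filter (fun j => j < i) := Finset.mem_filter.mpr ⟨hmS, hlt⟩
    have hpos : 1 ≤ (S.filter (fun j => j < i)).card := Finset.card_pos.mpr ⟨m, hm'⟩
    have h2 : ((S.erase m).filter (fun j => j < i)).card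
        = (S.filter (fun j => j < i)).card - 1 := by
      rw [Finset.filter_erase, Finset.card_erase_of_mem hm']
    rw [h1, h2, ← pow_add, ← pow_add]
    congr 1
    omega

lemma codiff_Qop (hs : ∀ c : GCell n, c.2.card = k → ¬ CellIn a w c → f c = 0)
    (hδ : ∀ c : GCell n, c.2.card + 1 = k → codiff f c = 0)
    (c : GCell n) (hc : c.2.card + 1 = k) : codiff (Qop a w m f) c = 0 := by
  obtain ⟨x, S⟩ := c
  have hc' : S.card + 1 = k := hc
  rw [codiff_apply]
  by_cases hmS : m ∈ S
  · apply Finset.sum_eq_zero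
    intro i hi
    rw [Qop_mem a w m f (c := (x, insert i S)) (Finset.mem_insert_of_mem hmS),
        Qop_mem a w m f (c := (x - unitV n i, insert i S)) (Finset.mem_insert_of_mem hmS),
        sub_zero, smul_zero]
  by_cases hxa : x m = a m
  case neg =>
    apply Finset.sum_eq_zero
    intro i hi
    by_cases him : m ∈ insert i S
    · rw [Qop_mem a w m f (c := (x, insert i S)) him,
          Qop_mem a w m f (c := (x - unitV n i, insert i S)) him,
          sub_zero, smul_zero]
    · have hne : i ≠ m := fun h => him (by rw [h]; exact Finset.mem_insert_self m S)
      have h1 : Qop a w m f (x, insert i S) = 0 := by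
        simp only [Qop]; rw [if_neg]; rintro ⟨-, h⟩; exact hxa h
      have h2 : Qop a w m f (x - unitV n i, insert i S) = 0 := by
        simp only [Qop]; rw [if_neg]; rintro ⟨-, h⟩
        rw [sub_unit_apply_ne hne] at h; exact hxa h
      rw [h1, h2, sub_zero, smul_zero]
  case pos =>
    have hmc : m ∈ Sᶜ := Finset.mem_compl.mpr hmS
    have hcard : ∀ t : ℤ, ((Function.update x m t, S) : GCell n).2.card + 1 = k := fun t => hc
    -- expand each Q on the main sum
    have main : ∀ i ∈ Sᶜ.erase m,
        ((-1 : ℤ) ^ ((S.filter (fun j => j < i)).card + 1)) •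
          (Qop a w m f (x, insert i S) - Qop a w m f (x - unitV n i, insert i S))
        = ∑ t ∈ Finset.Icc (a m) (a m + w),
            ((-1 : ℤ) ^ ((S.filter (fun j => j < i)).card + 1)) •
              (f (Function.update x m t, insert i S) -
               f (Function.update x m t - unitV n i, insert i S)) := by
      intro i hi
      have hne : i ≠ m := (Finset.mem_erase.mp hi).1
      have hmi : m ∉ insert i S := by
        simp only [Finset.mem_insert, not_or]
        exact ⟨Ne.symm hne, hmS⟩
      have h1 : Qop a w m f (x, insert i S)
          = ∑ t ∈ Finset.Icc (a m) (a m + w), f (Function.update x m t, insert i S) := by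
        simp only [Qop]; rw [if_pos ⟨hmi, hxa⟩]
      have h2 : Qop a w m f (x - unitV n i, insert i S)
          = ∑ t ∈ Finset.Icc (a m) (a m + w),
              f (Function.update x m t - unitV n i, insert i S) := by
        simp only [Qop]; rw [if_pos ⟨hmi, by rw [sub_unit_apply_ne hne]; exact hxa⟩]
        exact Finset.sum_congr rfl fun t _ => by rw [update_sub_unit hne]
      rw [h1, h2, ← Finset.sum_sub_distrib, Finset.smul_sum]
    -- the i = m term of the expansion of codiff f at slices
    have hterm : ∑ t ∈ Finset.Icc (a m) (a m + w),
        ((-1 : ℤ) ^ ((S.filter (fun j => j < m)).card + 1)) •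
          (f (Function.update x m t, insert m S) -
           f (Function.update x m t - unitV n m, insert m S)) = 0 := by
      rw [← Finset.smul_sum]
      have : ∀ t ∈ Finset.Icc (a m) (a m + w),
          f (Function.update x m t, insert m S) -
            f (Function.update x m t - unitV n m, insert m S)
          = (fun t => f (Function.update x m t, insert m S)) t -
            (fun t => f (Function.update x m t, insert m S)) (t - 1) := by
        intro t _
        rw [update_sub_unit_self]
      rw [Finset.sum_congr rfl this, sum_tele _ (by omega)]
      have hcardi : (insert m S).card = k := by
        rw [Finset.card_insert_of_notMem hmS]; omega
      have hA : f (Function.update x m (a m + w), insert m S) = 0 := by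
        refine hs (Function.update x m (a m + w), insert m S) hcardi (notCellIn m ?_)
        rw [if_pos (Finset.mem_insert_self m S), Function.update_self]
        omega
      have hB : f (Function.update x m (a m - 1), insert m S) = 0 := by
        refine hs (Function.update x m (a m - 1), insert m S) hcardi (notCellIn m ?_)
        rw [Function.update_self]
        omega
      rw [hA, hB, sub_zero, smul_zero]
    -- sum of codiff f over the slices is zero
    have hslice : ∑ t ∈ Finset.Icc (a m) (a m + w),
        codiff f (Function.update x m t, S) = 0 :=
      Finset.sum_eq_zero fun t _ => hδ _ (hcard t)
    -- expand the slices
    have hexp : ∀ t : ℤ, codiff f (Function.update x m t, S)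
        = ((-1 : ℤ) ^ ((S.filter (fun j => j < m)).card + 1)) •
            (f (Function.update x m t, insert m S) -
             f (Function.update x m t - unitV n m, insert m S))
          + ∑ i ∈ Sᶜ.erase m,
            ((-1 : ℤ) ^ ((S.filter (fun j => j < i)).card + 1)) •
              (f (Function.update x m t, insert i S) -
               f (Function.update x m t - unitV n i, insert i S)) := by
      intro t
      rw [codiff_apply, ← Finset.add_sum_erase _ _ hmc]
    rw [← Finset.add_sum_erase _ _ hmc]
    have hQm : Qop a w m f (x, insert m S) = 0 :=
      Qop_mem a w m f (c := (x, insert m S)) (Finset.mem_insert_self m S)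
    have hQm' : Qop a w m f (x - unitV n m, insert m S) = 0 :=
      Qop_mem a w m f (c := (x - unitV n m, insert m S)) (Finset.mem_insert_self m S)
    rw [hQm, hQm', sub_zero, smul_zero, zero_add]
    rw [Finset.sum_congr rfl main, Finset.sum_comm]
    have := hslice
    rw [Finset.sum_congr rfl (fun t _ => hexp t), Finset.sum_add_distrib, hterm, zero_add]
      at this
    exact this

lemma homotopy (hs : ∀ c : GCell n, c.2.card = k → ¬ CellIn a w c → f c = 0)
    (hδ : ∀ c : GCell n, c.2.card + 1 = k → codiff f c = 0)
    (c : GCell n) (hc : c.2.card = k) :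
    f c = codiff (Pop a w m f) c + Qop a w m f c := by
  obtain ⟨x, S⟩ := c
  have hc' : S.card = k := hc
  rw [codiff_apply]
  by_cases hmS : m ∈ S
  · -- case m ∈ S
    rw [Qop_mem a w m f (c := (x, S)) hmS, add_zero]
    by_cases hlow : a m ≤ x m
    case neg =>
      have hxf : f (x, S) = 0 := hs _ hc (notCellIn m (by rw [if_pos hmS]; omega))
      rw [hxf]
      symm
      apply Finset.sum_eq_zero
      intro i hi
      have hne : i ≠ m := fun h => (Finset.mem_compl.mp hi) (h ▸ hmS)
      have p1 : Pop a w m f (x, insert i S) = 0 := by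
        simp only [Pop]; rw [if_neg]; rintro ⟨-, h⟩; exact hlow h
      have p2 : Pop a w m f (x - unitV n i, insert i S) = 0 := by
        simp only [Pop]; rw [if_neg]; rintro ⟨-, h⟩
        rw [sub_unit_apply_ne hne] at h; exact hlow h
      rw [p1, p2, sub_zero, smul_zero]
    case pos =>
    by_cases hhigh : x m + 1 ≤ a m + w
    case neg =>
      have hxf : f (x, S) = 0 := hs _ hc (notCellIn m (by rw [if_pos hmS]; omega))
      rw [hxf]
      symm
      apply Finset.sum_eq_zero
      intro i hi
      have hne : i ≠ m := fun h => (Finset.mem_compl.mp hi) (h ▸ hmS)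
      have hmi : m ∈ insert i S := Finset.mem_insert_of_mem hmS
      have p1 : Pop a w m f (x, insert i S) = 0 := by
        rw [Pop_pos a w m f hmi hlow, Finset.Icc_eq_empty (by omega), Finset.sum_empty,
          smul_zero]
      have p2 : Pop a w m f (x - unitV n i, insert i S) = 0 := by
        rw [Pop_pos a w m f hmi (by rw [sub_unit_apply_ne hne]; exact hlow),
          sub_unit_apply_ne hne, Finset.Icc_eq_empty (by omega), Finset.sum_empty, smul_zero]
      rw [p1, p2, sub_zero, smul_zero]
    case pos =>
      -- main case: m ∈ S, a m ≤ x m, x m + 1 ≤ a m + w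
      have hk1 : 1 ≤ S.card := Finset.card_pos.mpr ⟨m, hmS⟩
      have hcard' : ∀ s : ℤ,
          ((Function.update x m s, S.erase m) : GCell n).2.card + 1 = k := by
        intro s
        show (S.erase m).card + 1 = k
        rw [Finset.card_erase_of_mem hmS]
        omega
      have hδs : ∀ s ∈ Finset.Icc (x m + 1) (a m + w),
          codiff f (Function.update x m s, S.erase m) = 0 :=
        fun s _ => hδ _ (hcard' s)
      have hfilter : (S.erase m).filter (fun j => j < m) = S.filter (fun j => j < m) := by
        rw [Finset.filter_erase, Finset.erase_eq_of_notMem]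
        simp [Finset.mem_filter]
      have hmc : m ∉ Sᶜ := by simp [hmS]
      -- expansion of codiff f on slices
      have hexp : ∀ s : ℤ, codiff f (Function.update x m s, S.erase m)
          = ((-1 : ℤ) ^ ((S.filter (fun j => j < m)).card + 1)) •
              ((fun t => f (Function.update x m t, S)) s -
               (fun t => f (Function.update x m t, S)) (s - 1))
            + ∑ i ∈ Sᶜ,
              ((-1 : ℤ) ^ (((S.erase m).filter (fun j => j < i)).card + 1)) •
                (f (Function.update x m s, insert i (S.erase m)) -
                 f (Function.update x m s - unitV n i, insert i (S.erase m))) := by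
        intro s
        rw [codiff_apply]
        have hcompl : (((Function.update x m s, S.erase m) : GCell n).2)ᶜ = insert m Sᶜ := by
          simp only [Finset.compl_erase]
        rw [hcompl, Finset.sum_insert hmc]
        congr 1
        rw [hfilter, Finset.insert_erase hmS, update_sub_unit_self]
      have hslice : ∑ s ∈ Finset.Icc (x m + 1) (a m + w),
          codiff f (Function.update x m s, S.erase m) = 0 :=
        Finset.sum_eq_zero hδs
      rw [Finset.sum_congr rfl (fun s _ => hexp s), Finset.sum_add_distrib,
          ← Finset.smul_sum, sum_tele _ (by omega)] at hslice
      have hA : f (Function.update x m (a m + w), S) = 0 := by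
        refine hs (Function.update x m (a m + w), S) hc' (notCellIn m ?_)
        rw [if_pos hmS, Function.update_self]
        omega
      have hx1 : x m + 1 - 1 = x m := by ring
      rw [hA, hx1, Function.update_eq_self, zero_sub, smul_neg, neg_add_eq_zero] at hslice
      -- hslice : sign • f (x,S) = double sum
      -- now expand the left side (codiff (Pop f))
      have main : ∀ i ∈ Sᶜ,
          ((-1 : ℤ) ^ ((S.filter (fun j => j < i)).card + 1)) •
            (Pop a w m f (x, insert i S) - Pop a w m f (x - unitV n i, insert i S))
          = ((-1 : ℤ) ^ ((S.filter (fun j => j < m)).card + 1)) •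
            (((-1 : ℤ) ^ (((S.erase m).filter (fun j => j < i)).card + 1)) •
              ∑ s ∈ Finset.Icc (x m + 1) (a m + w),
                (f (Function.update x m s, insert i (S.erase m)) -
                 f (Function.update x m s - unitV n i, insert i (S.erase m)))) := by
        intro i hi
        have hiS : i ∉ S := Finset.mem_compl.mp hi
        have hne : i ≠ m := fun h => hiS (h ▸ hmS)
        have hmi : m ∈ insert i S := Finset.mem_insert_of_mem hmS
        have p1 : Pop a w m f (x, insert i S)
            = ((-1 : ℤ) ^ (((insert i S).filter (fun j => j < m)).card)) •
              ∑ s ∈ Finset.Icc (x m + 1) (a m + w),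
                f (Function.update x m s, insert i (S.erase m)) := by
          rw [Pop_pos a w m f hmi hlow, Finset.erase_insert_of_ne hne]
        have p2 : Pop a w m f (x - unitV n i, insert i S)
            = ((-1 : ℤ) ^ (((insert i S).filter (fun j => j < m)).card)) •
              ∑ s ∈ Finset.Icc (x m + 1) (a m + w),
                f (Function.update x m s - unitV n i, insert i (S.erase m)) := by
          rw [Pop_pos a w m f hmi (by rw [sub_unit_apply_ne hne]; exact hlow),
            sub_unit_apply_ne hne, Finset.erase_insert_of_ne hne]
          congr 1
          exact Finset.sum_congr rfl fun s _ => by rw [update_sub_unit hne]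
        rw [p1, p2, ← smul_sub, ← Finset.sum_sub_distrib, smul_smul, smul_smul]
        congr 1
        exact sign_eq hmS hiS hne
      rw [Finset.sum_congr rfl main, ← Finset.smul_sum]
      have : ∀ i ∈ Sᶜ,
          (((-1 : ℤ) ^ (((S.erase m).filter (fun j => j < i)).card + 1)) •
            ∑ s ∈ Finset.Icc (x m + 1) (a m + w),
              (f (Function.update x m s, insert i (S.erase m)) -
               f (Function.update x m s - unitV n i, insert i (S.erase m))))
          = ∑ s ∈ Finset.Icc (x m + 1) (a m + w),
              ((-1 : ℤ) ^ (((S.erase m).filter (fun j => j < i)).card + 1)) •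
                (f (Function.update x m s, insert i (S.erase m)) -
                 f (Function.update x m s - unitV n i, insert i (S.erase m))) :=
        fun i _ => Finset.smul_sum
      rw [Finset.sum_congr rfl this, Finset.sum_comm, ← hslice, smul_smul, ← pow_add]
      rw [show ((S.filter (fun j => j < m)).card + 1) + ((S.filter (fun j => j < m)).card + 1)
            = 2 * ((S.filter (fun j => j < m)).card + 1) from by ring]
      rw [pow_mul, neg_one_sq, one_pow, one_smul]
  · -- case m ∉ S
    have hmc : m ∈ Sᶜ := Finset.mem_compl.mpr hmS
    rw [Finset.sum_eq_single_of_mem m hmc ?side]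
    case side =>
      intro b hb hbm
      have p1 : Pop a w m f (x, insert b S) = 0 := by
        simp only [Pop]; rw [if_neg]
        rintro ⟨h, -⟩
        rcases Finset.mem_insert.mp h with h' | h'
        · exact hbm h'.symm
        · exact hmS h'
      have p2 : Pop a w m f (x - unitV n b, insert b S) = 0 := by
        simp only [Pop]; rw [if_neg]
        rintro ⟨h, -⟩
        rcases Finset.mem_insert.mp h with h' | h'
        · exact hbm h'.symm
        · exact hmS h'
      rw [p1, p2, sub_zero, smul_zero]
    have hqfilt : ((insert m S).filter (fun j => j < m)).card
        = (S.filter (fun j => j < m)).card := by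
      rw [Finset.filter_insert, if_neg (lt_irrefl m)]
    have herase : (insert m S).erase m = S := Finset.erase_insert hmS
    have p1 : Pop a w m f (x, insert m S)
        = if a m ≤ x m then ((-1 : ℤ) ^ (S.filter (fun j => j < m)).card) •
            ∑ s ∈ Finset.Icc (x m + 1) (a m + w), f (Function.update x m s, S) else 0 := by
      simp only [Pop]
      rcases le_or_gt (a m) (x m) with h | h
      · rw [if_pos ⟨Finset.mem_insert_self m S, h⟩, if_pos h, hqfilt, herase]
      · rw [if_neg (fun hh => absurd hh.2 (by omega)), if_neg (by omega)]
    have p2 : Pop a w m f (x - unitV n m, insert m S)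
        = if a m ≤ x m - 1 then ((-1 : ℤ) ^ (S.filter (fun j => j < m)).card) •
            ∑ s ∈ Finset.Icc (x m) (a m + w), f (Function.update x m s, S) else 0 := by
      simp only [Pop]
      rcases le_or_gt (a m) (x m - 1) with h | h
      · rw [if_pos ⟨Finset.mem_insert_self m S, by rw [sub_unit_apply_self]; exact h⟩,
          if_pos h, hqfilt, herase, sub_unit_apply_self]
        have hb : x m - 1 + 1 = x m := by ring
        rw [hb]
        congr 1
        exact Finset.sum_congr rfl fun s _ => by rw [update_sub_unit_self']
      · rw [if_neg (fun hh => absurd hh.2 (by rw [sub_unit_apply_self]; omega)),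
          if_neg (by omega)]
    have hsign : ((-1 : ℤ) ^ ((S.filter (fun j => j < m)).card + 1)) *
        ((-1 : ℤ) ^ ((S.filter (fun j => j < m)).card)) = -1 := by
      rw [← pow_add]
      have : (S.filter (fun j => j < m)).card + 1 + (S.filter (fun j => j < m)).card
          = 2 * (S.filter (fun j => j < m)).card + 1 := by ring
      rw [this, pow_succ, pow_mul, neg_one_sq, one_pow, one_mul]
    rcases lt_trichotomy (x m) (a m) with h | h | h
    · -- x m < a m
      rw [p1, p2, if_neg (by omega), if_neg (by omega), sub_zero, smul_zero]
      have hq : Qop a w m f (x, S) = 0 := by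
        simp only [Qop]; rw [if_neg]; rintro ⟨-, hh⟩; omega
      rw [hq, add_zero]
      exact hs _ hc (notCellIn m (by rw [if_neg hmS]; omega))
    · -- x m = a m
      rw [p1, p2, if_pos (by omega), if_neg (by omega), sub_zero]
      have hq : Qop a w m f (x, S)
          = ∑ t ∈ Finset.Icc (a m) (a m + w), f (Function.update x m t, S) := by
        simp only [Qop]; rw [if_pos ⟨hmS, h⟩]
      rw [hq]
      have hsplit : Finset.Icc (a m) (a m + w) = insert (a m) (Finset.Icc (a m + 1) (a m + w)) := by
        ext y; simp only [Finset.mem_insert, Finset.mem_Icc]; omega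
      rw [hsplit, Finset.sum_insert (by simp only [Finset.mem_Icc]; omega)]
      have hxx : Function.update x m (a m) = x := by rw [← h, Function.update_eq_self]
      rw [hxx, smul_smul, hsign, h, neg_one_smul]
      abel
    · -- x m > a m
      have hq : Qop a w m f (x, S) = 0 := by
        simp only [Qop]; rw [if_neg]; rintro ⟨-, hh⟩; omega
      rw [hq, add_zero, p1, p2, if_pos (by omega), if_pos (by omega), ← smul_sub,
        smul_smul, hsign]
      rcases le_or_gt (x m) (a m + w) with hle | hgt
      · have hsplit : Finset.Icc (x m) (a m + w)
            = insert (x m) (Finset.Icc (x m + 1) (a m + w)) := by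
          ext y; simp only [Finset.mem_insert, Finset.mem_Icc]; omega
        rw [hsplit, Finset.sum_insert (by simp only [Finset.mem_Icc]; omega),
          Function.update_eq_self]
        rw [show ∀ (A B : G), A - (B + A) = -B from fun A B => by abel]
        rw [neg_one_smul, neg_neg]
      · have e1 : Finset.Icc (x m + 1) (a m + (w : ℤ)) = ∅ := Finset.Icc_eq_empty (by omega)
        have e2 : Finset.Icc (x m) (a m + (w : ℤ)) = ∅ := Finset.Icc_eq_empty (by omega)
        rw [e1, e2, Finset.sum_empty, sub_self, smul_zero]
        exact hs _ hc (notCellIn m (by rw [if_neg hmS]; omega))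

lemma list_step (L : List (Fin n)) :
    ∀ f : GCell n → G,
      (∀ c : GCell n, c.2.card = k → ¬ CellIn a w c → f c = 0) →
      (∀ c : GCell n, c.2.card + 1 = k → codiff f c = 0) →
      ∃ h g : GCell n → G,
        (∀ c : GCell n, c.2.card = k + 1 → ¬ CellIn a w c → h c = 0) ∧
        (∀ c : GCell n, c.2.card = k → f c = codiff h c + g c) ∧
        (∀ c : GCell n, c.2.card = k → ¬ CellIn a w c → g c = 0) ∧
        (∀ c : GCell n, c.2.card + 1 = k → codiff g c = 0) ∧
        (∀ m₀ : Fin n, (∀ c : GCell n, c.2.card = k → m₀ ∈ c.2 → f c = 0) →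
          ∀ c : GCell n, c.2.card = k → m₀ ∈ c.2 → g c = 0) ∧
        (∀ c : GCell n, c.2.card = k → (∃ m₀ ∈ L, m₀ ∈ c.2) → g c = 0) := by
  induction L with
  | nil =>
    intro f hs hδ
    refine ⟨fun _ => 0, f, fun _ _ _ => rfl, fun c _ => ?_, hs, hδ, fun m₀ hk => hk, ?_⟩
    · rw [codiff_zerof, zero_add]
    · rintro c - ⟨m₀, hm, -⟩
      exact absurd hm List.not_mem_nil
  | cons m L ih =>
    intro f hs hδ
    obtain ⟨h₂, g₂, hh₂, heq₂, hs₂, hδ₂, hpres₂, hL₂⟩ :=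
      ih (Qop a w m f) (Qop_not_in a w m f k hs) (codiff_Qop a w m f k hs hδ)
    have hQkill : ∀ c : GCell n, c.2.card = k → m ∈ c.2 → Qop a w m f c = 0 :=
      fun c _ hm => Qop_mem a w m f hm
    refine ⟨fun c => Pop a w m f c + h₂ c, g₂, ?_, ?_, hs₂, hδ₂, ?_, ?_⟩
    · intro c hcc hout
      show Pop a w m f c + h₂ c = 0
      rw [Pop_not_in a w m f k hs c hcc hout, hh₂ c hcc hout, add_zero]
    · intro c hcc
      calc f c = codiff (Pop a w m f) c + Qop a w m f c :=
            homotopy a w m f k hs hδ c hcc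
        _ = codiff (Pop a w m f) c + (codiff h₂ c + g₂ c) := by rw [heq₂ c hcc]
        _ = codiff (fun c => Pop a w m f c + h₂ c) c + g₂ c := by
            rw [codiff_addf]; abel
    · intro m₀ hk' c hcc hm₀
      exact hpres₂ m₀ (fun c' hc' hm' => Qop_kill a w m f k m₀ hk' c' hc' hm') c hcc hm₀
    · rintro c hcc ⟨m₀, hmL, hmc⟩
      rcases List.mem_cons.mp hmL with rfl | hmem
      · exact hpres₂ m₀ hQkill c hcc hmc
      · exact hL₂ c hcc ⟨m₀, hmem, hmc⟩

lemma main_cube (hk1 : 1 ≤ k)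
    (hs : ∀ c : GCell n, c.2.card = k → ¬ CellIn a w c → f c = 0)
    (hδ : ∀ c : GCell n, c.2.card + 1 = k → codiff f c = 0) :
    ∃ h : GCell n → G,
      (∀ c : GCell n, c.2.card = k + 1 → ¬ CellIn a w c → h c = 0) ∧
      ∀ c : GCell n, c.2.card = k → f c = codiff h c := by
  obtain ⟨h, g, hh, heq, -, -, -, hL⟩ := list_step a w k (Finset.univ.toList) f hs hδ
  refine ⟨h, hh, fun c hc => ?_⟩
  have hg : g c = 0 := by
    apply hL c hc
    obtain ⟨m, hm⟩ := Finset.card_pos.mp (show 0 < c.2.card from by omega)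
    exact ⟨m, by simp [Finset.mem_toList], hm⟩
  rw [heq c hc, hg, add_zero]

end PoincareHelper

/-- **Lemma 2.7 (Poincaré lemma for the coderivative).**
Take any `1 ≤ k ≤ n − 1` and an abelian group `G`.  Let `f` be a `G`-valued `k`-form on
`ℤⁿ` that is zero outside a finite region and satisfies `δf = 0`.  Then there is a
`G`-valued `(k+1)`-form `h` on `ℤⁿ` with `f = δh`.  Moreover, if `f` is zero on every
`k`-cell not in a cube `B`, then `h` can be chosen to be zero on every `(k+1)`-cell not
in `B`. -/
theorem poincare_lemma_coderivative (n : ℕ) (G : Type*) [AddCommGroup G]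
    (k : ℕ) (hk1 : 1 ≤ k) (hkn : k + 1 ≤ n)
    (f : GCell n → G)
    (hfin : {c : GCell n | c.2.card = k ∧ f c ≠ 0}.Finite)
    (hδ : ∀ c : GCell n, c.2.card + 1 = k → codiff f c = 0) :
    (∃ h : GCell n → G, ∀ c : GCell n, c.2.card = k → f c = codiff h c) ∧
    (∀ (a : Fin n → ℤ) (w : ℕ), 0 < w →
      (∀ c : GCell n, c.2.card = k → ¬ CellIn a w c → f c = 0) →
      ∃ h : GCell n → G,
        (∀ c : GCell n, c.2.card = k + 1 → ¬ CellIn a w c → h c = 0) ∧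
        ∀ c : GCell n, c.2.card = k → f c = codiff h c) := by
  classical
  have main : ∀ (a : Fin n → ℤ) (w : ℕ),
      (∀ c : GCell n, c.2.card = k → ¬ CellIn a w c → f c = 0) →
      ∃ h : GCell n → G,
        (∀ c : GCell n, c.2.card = k + 1 → ¬ CellIn a w c → h c = 0) ∧
        ∀ c : GCell n, c.2.card = k → f c = codiff h c :=
    fun a w hs => PoincareHelper.main_cube a w f k hk1 hs hδ
  constructor
  · obtain ⟨N, hNb⟩ : ∃ N : ℕ, ∀ c ∈ hfin.toFinset, ∀ m', (c.1 m').natAbs ≤ N :=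
      ⟨hfin.toFinset.sup (fun c => Finset.univ.sup (fun m => (c.1 m).natAbs)),
       fun c hc m' => le_trans
         (Finset.le_sup (f := fun m => (c.1 m).natAbs) (Finset.mem_univ m'))
         (Finset.le_sup (f := fun c : GCell n =>
           Finset.univ.sup (fun m => (c.1 m).natAbs)) hc)⟩
    have hbound : ∀ c : GCell n, c.2.card = k →
        ¬ CellIn (fun _ => -(N : ℤ) - 1) (2 * N + 2) c → f c = 0 := by
      intro c hc hout
      by_contra hne
      apply hout
      intro m'
      have h1 : (c.1 m').natAbs ≤ N := hNb c (hfin.mem_toFinset.mpr ⟨hc, hne⟩) m'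
      show -(N : ℤ) - 1 ≤ c.1 m' ∧
        c.1 m' + (if m' ∈ c.2 then 1 else 0) ≤ -(N : ℤ) - 1 + ((2 * N + 2 : ℕ) : ℤ)
      refine ⟨by omega, ?_⟩
      by_cases hm : m' ∈ c.2
      · rw [if_pos hm]; omega
      · rw [if_neg hm]; omega
    obtain ⟨h, -, hco⟩ := main _ _ hbound
    exact ⟨h, hco⟩
  · intro a w _ hsupp
    exact main a w hsupp
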